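/- With the SVD-aligned bases as above (⟨w_i*, v_j*⟩ = σ_j δ_{ij}, p = #{j : σ_j = 1}, q = #{j : σ_j > 0}), the family {(1−σ_j²)^{−1/2}(v_j* − σ_j w_j*)}_{j=p+1}^{q} ∪ {v_j*}_{j=q+1}^{n} is an orthonormal basis of P_{W^⊥}(V), the orthogonal projection of V onto W^⊥. -/

import Mathlib

open scoped RealInnerProductSpace

/-- With SVD-aligned bases, the family `{(1-σ_j²)^{-1/2}(v_j - σ_j w_j)}_{p < j ≤ q} ∪
{v_j}_{q < j ≤ n}` is an orthonormal basis of `P_{Wᗮ}(V)`, the orthogonal projection of `V`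
onto `Wᗮ`. -/
theorem stmt10 {H : Type*} [NormedAddCommGroup H] [InnerProductSpace ℝ H] [CompleteSpace H]
    {m n p q : ℕ} (v : Fin n → H) (w : Fin m → H)
    (hv : Orthonormal ℝ v) (hw : Orthonormal ℝ w) (σ : ℕ → ℝ)
    (hcross : ∀ (i : Fin m) (j : Fin n), ⟪w i, v j⟫ = if (i : ℕ) = (j : ℕ) then σ (j : ℕ) else 0)
    (hσanti : ∀ i j : ℕ, i ≤ j → σ j ≤ σ i) (hσ01 : ∀ j, 0 ≤ σ j ∧ σ j ≤ 1)
    (hp : ∀ j < p, σ j = 1) (hp' : ∀ j, p ≤ j → σ j ≠ 1)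
    (hq : ∀ j < q, 0 < σ j) (hq' : ∀ j, q ≤ j → σ j = 0)
    (hqm : q ≤ m) (hqn : q ≤ n) :
    let PW : H →L[ℝ] H := ∑ i : Fin m, (innerSL ℝ (w i)).smulRight (w i)
    let g : {j : Fin n // p ≤ (j : ℕ)} → H := fun j =>
      if hj : ((j : Fin n) : ℕ) < q then
        (Real.sqrt (1 - σ ((j : Fin n) : ℕ) ^ 2))⁻¹ •
          (v j - σ ((j : Fin n) : ℕ) • w ⟨((j : Fin n) : ℕ), lt_of_lt_of_le hj hqm⟩)
      else v j
    Orthonormal ℝ g ∧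
      Submodule.span ℝ (Set.range g)
        = (Submodule.span ℝ (Set.range v)).map (LinearMap.id - PW.toLinearMap) := by
  intro PW g
  have hpq : p ≤ q := by
    by_contra h
    push_neg at h
    have h1 := hp q h
    rw [hq' q le_rfl] at h1
    norm_num at h1
  have hσlt1 : ∀ j, p ≤ j → σ j < 1 := fun j hpj =>
    lt_of_le_of_ne (hσ01 j).2 (hp' j hpj)
  have hc_pos : ∀ j, p ≤ j → (0:ℝ) < 1 - σ j ^ 2 := by
    intro j hpj
    have h1 := (hσ01 j).1
    have h2 := hσlt1 j hpj
    nlinarith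
  -- inner products between v's and w's
  have hvv : ∀ a b : Fin n, ⟪v a, v b⟫ = if a = b then (1:ℝ) else 0 :=
    fun a b => orthonormal_iff_ite.mp hv a b
  have hww : ∀ a b : Fin m, ⟪w a, w b⟫ = if a = b then (1:ℝ) else 0 :=
    fun a b => orthonormal_iff_ite.mp hw a b
  have hvw : ∀ (a : Fin n) (b : Fin m),
      ⟪v a, w b⟫ = if (b : ℕ) = (a : ℕ) then σ (a : ℕ) else 0 := by
    intro a b
    rw [real_inner_comm, hcross]
  -- PW on v
  have hPWv : ∀ (j : Fin n) (hj : (j:ℕ) < m),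
      PW (v j) = σ (j:ℕ) • w ⟨(j:ℕ), hj⟩ := by
    intro j hj
    simp only [PW, ContinuousLinearMap.sum_apply, ContinuousLinearMap.smulRight_apply,
      innerSL_apply_apply, hcross]
    rw [Finset.sum_eq_single (⟨(j:ℕ), hj⟩ : Fin m)]
    · simp
    · intro i _ hi
      rw [if_neg, zero_smul]
      intro h
      exact hi (Fin.ext h)
    · simp
  have hPWv0 : ∀ (j : Fin n), q ≤ (j:ℕ) → PW (v j) = 0 := by
    intro j hj
    simp only [PW, ContinuousLinearMap.sum_apply, ContinuousLinearMap.smulRight_apply,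
      innerSL_apply_apply, hcross]
    apply Finset.sum_eq_zero
    intro i _
    split
    · rw [hq' _ hj, zero_smul]
    · rw [zero_smul]
  -- inner products of the u vectors
  have hinner : ∀ (a b : Fin n) (ha : (a:ℕ) < q) (hb : (b:ℕ) < q),
      ⟪v a - σ (a:ℕ) • w ⟨(a:ℕ), lt_of_lt_of_le ha hqm⟩,
       v b - σ (b:ℕ) • w ⟨(b:ℕ), lt_of_lt_of_le hb hqm⟩⟫
        = if a = b then 1 - σ (b:ℕ)^2 else 0 := by
    intro a b ha hb
    simp only [inner_sub_left, inner_sub_right, real_inner_smul_left, real_inner_smul_right,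
      hvv, hww, hvw, hcross, Fin.mk.injEq]
    by_cases hab : (a:ℕ) = (b:ℕ)
    · have hab' : a = b := Fin.ext hab
      simp [hab, hab']
      ring
    · have hab' : a ≠ b := fun h => hab (congrArg _ h)
      simp [hab, hab', Ne.symm hab]
  constructor
  · rw [orthonormal_iff_ite]
    intro i j
    by_cases hi : ((i : Fin n) : ℕ) < q <;> by_cases hj : ((j : Fin n) : ℕ) < q
    · have hgi : g i = (Real.sqrt (1 - σ ((i:Fin n):ℕ) ^ 2))⁻¹ •
          (v i - σ ((i:Fin n):ℕ) • w ⟨((i:Fin n):ℕ), lt_of_lt_of_le hi hqm⟩) := dif_pos hi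
      have hgj : g j = (Real.sqrt (1 - σ ((j:Fin n):ℕ) ^ 2))⁻¹ •
          (v j - σ ((j:Fin n):ℕ) • w ⟨((j:Fin n):ℕ), lt_of_lt_of_le hj hqm⟩) := dif_pos hj
      rw [hgi, hgj, real_inner_smul_left, real_inner_smul_right, hinner _ _ hi hj]
      by_cases hij : i = j
      · subst hij
        rw [if_pos rfl, if_pos rfl]
        have hc := hc_pos ((i:Fin n):ℕ) i.2
        have hs : Real.sqrt (1 - σ ((i:Fin n):ℕ)^2) > 0 := Real.sqrt_pos.mpr hc
        have hsq : Real.sqrt (1 - σ ((i:Fin n):ℕ)^2) * Real.sqrt (1 - σ ((i:Fin n):ℕ)^2)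
            = 1 - σ ((i:Fin n):ℕ)^2 := Real.mul_self_sqrt hc.le
        field_simp
        rw [Real.sq_sqrt hc.le]
      · have hij' : (i : Fin n) ≠ (j : Fin n) := fun h => hij (Subtype.ext h)
        rw [if_neg hij', if_neg hij, mul_zero, mul_zero]
    · have hgi : g i = (Real.sqrt (1 - σ ((i:Fin n):ℕ) ^ 2))⁻¹ •
          (v i - σ ((i:Fin n):ℕ) • w ⟨((i:Fin n):ℕ), lt_of_lt_of_le hi hqm⟩) := dif_pos hi
      have hgj : g j = v j := dif_neg hj
      have hne : ((i:Fin n):ℕ) ≠ ((j:Fin n):ℕ) := ne_of_lt (lt_of_lt_of_le hi (le_of_not_gt hj))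
      have hne2 : (i : Fin n) ≠ (j : Fin n) := fun h => hne (congrArg Fin.val h)
      have hne3 : i ≠ j := fun h => hne2 (congrArg _ h)
      rw [hgi, hgj, real_inner_smul_left, inner_sub_left, real_inner_smul_left, hvv, hcross]
      simp [hne, hne2, hne3]
    · have hgi : g i = v i := dif_neg hi
      have hgj : g j = (Real.sqrt (1 - σ ((j:Fin n):ℕ) ^ 2))⁻¹ •
          (v j - σ ((j:Fin n):ℕ) • w ⟨((j:Fin n):ℕ), lt_of_lt_of_le hj hqm⟩) := dif_pos hj
      have hne : ((j:Fin n):ℕ) ≠ ((i:Fin n):ℕ) := ne_of_lt (lt_of_lt_of_le hj (le_of_not_gt hi))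
      have hne2 : (i : Fin n) ≠ (j : Fin n) := fun h => hne (congrArg Fin.val h.symm)
      have hne3 : i ≠ j := fun h => hne2 (congrArg _ h)
      rw [hgi, hgj, real_inner_smul_right, inner_sub_right, real_inner_smul_right, hvv, hvw]
      simp [hne, hne2, hne3]
    · have hgi : g i = v i := dif_neg hi
      have hgj : g j = v j := dif_neg hj
      rw [hgi, hgj, hvv]
      simp [Subtype.ext_iff]
  · rw [Submodule.map_span, ← Set.range_comp]
    have hTv : ⇑((LinearMap.id : H →ₗ[ℝ] H) - PW.toLinearMap) ∘ v = fun j => v j - PW (v j) := by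
      funext j
      simp
    rw [hTv]
    apply le_antisymm
    · rw [Submodule.span_le]
      rintro x ⟨j, rfl⟩
      by_cases hj : ((j : Fin n) : ℕ) < q
      · have h1 : g j = (Real.sqrt (1 - σ ((j:Fin n):ℕ) ^ 2))⁻¹ •
            (v j - σ ((j:Fin n):ℕ) • w ⟨((j:Fin n):ℕ), lt_of_lt_of_le hj hqm⟩) := dif_pos hj
        have h2 : g j = (Real.sqrt (1 - σ ((j:Fin n):ℕ) ^ 2))⁻¹ •
            (v (j:Fin n) - PW (v (j:Fin n))) := by
          rw [h1, hPWv (j : Fin n) (lt_of_lt_of_le hj hqm)]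
        rw [h2]
        exact Submodule.smul_mem _ _ (Submodule.subset_span ⟨(j : Fin n), rfl⟩)
      · have h1 : g j = v j := dif_neg hj
        have h2 : g j = v (j:Fin n) - PW (v (j:Fin n)) := by
          rw [h1, hPWv0 (j : Fin n) (le_of_not_gt hj), sub_zero]
        rw [h2]
        exact Submodule.subset_span ⟨(j : Fin n), rfl⟩
    · rw [Submodule.span_le]
      rintro x ⟨j, rfl⟩
      show v j - PW (v j) ∈ (Submodule.span ℝ (Set.range g) : Set H)
      by_cases hjp : (j : ℕ) < p
      · have hjq : (j : ℕ) < q := by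
          by_contra h
          have h1 := hq' (j:ℕ) (le_of_not_gt h)
          rw [hp _ hjp] at h1
          norm_num at h1
        have hjm := lt_of_lt_of_le hjq hqm
        have h2 : ⟪w ⟨(j:ℕ), hjm⟩, v j⟫ = 1 := by rw [hcross]; simp [hp _ hjp]
        have hns : ‖v j - w ⟨(j:ℕ), hjm⟩‖ ^ 2 = 0 := by
          rw [norm_sub_sq_real, hv.1 j, hw.1, real_inner_comm, h2]; ring
        have hvwj : v j = w ⟨(j:ℕ), hjm⟩ := by
          rw [← sub_eq_zero, ← norm_eq_zero]
          exact (pow_eq_zero_iff two_ne_zero).mp hns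
        rw [hPWv j hjm, hp _ hjp, one_smul, ← hvwj, sub_self]
        exact Submodule.zero_mem _
      · push_neg at hjp
        by_cases hjq : (j : ℕ) < q
        · have hjm := lt_of_lt_of_le hjq hqm
          have hgj : g ⟨j, hjp⟩ = (Real.sqrt (1 - σ (j:ℕ) ^ 2))⁻¹ •
              (v j - σ (j:ℕ) • w ⟨(j:ℕ), hjm⟩) := dif_pos hjq
          have hc := hc_pos (j:ℕ) hjp
          have hs : Real.sqrt (1 - σ (j:ℕ)^2) ≠ 0 := ne_of_gt (Real.sqrt_pos.mpr hc)
          have heq : v j - PW (v j) = Real.sqrt (1 - σ (j:ℕ)^2) • g ⟨j, hjp⟩ := by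
            rw [hgj, smul_inv_smul₀ hs, hPWv j hjm]
          rw [heq]
          exact Submodule.smul_mem _ _ (Submodule.subset_span ⟨⟨j, hjp⟩, rfl⟩)
        · have hgj : g ⟨j, hjp⟩ = v j := dif_neg hjq
          have heq : v j - PW (v j) = g ⟨j, hjp⟩ := by
            rw [hPWv0 j (le_of_not_gt hjq), sub_zero, hgj]
          rw [heq]
          exact Submodule.subset_span ⟨⟨j, hjp⟩, rfl⟩
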